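/- Let F : ℝⁿ → ℝⁿ be a C¹ map with det DF(x) ≠ 0 for all x ∈ ℝⁿ. Then F is a homeomorphism of ℝⁿ onto ℝⁿ (i.e. F is bijective with continuous inverse) if and only if ‖F(x)‖ → ∞ as ‖x‖ → ∞. -/

import Mathlib

open Filter

open Set Topology

section Lifts

variable {X Y : Type*} [TopologicalSpace X] [TopologicalSpace Y]

/-- Gluing two continuous pieces at a matching point. -/
lemma glue_contOn {p g : ℝ → X} {a b c : ℝ}
    (hp : ContinuousOn p (Icc a b)) (hg : ContinuousOn g (Icc b c))
    (hmatch : p b = g b) :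
    ContinuousOn (fun s => if s ≤ b then p s else g s) (Icc a c) := by
  intro s hs
  set q : ℝ → X := fun s => if s ≤ b then p s else g s with hq
  have hsub : Icc a c ⊆ Icc a b ∪ Icc b c := fun t ht =>
    (le_or_gt t b).elim (fun h => Or.inl ⟨ht.1, h⟩) (fun h => Or.inr ⟨h.le, ht.2⟩)
  have h1 : ContinuousWithinAt q (Icc a b) s := by
    rcases le_or_gt s b with hsb | hsb
    · exact (hp s ⟨hs.1, hsb⟩).congr (fun t ht => if_pos ht.2) (if_pos hsb)
    · exact continuousWithinAt_of_notMem_closure (by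
        rw [isClosed_Icc.closure_eq]; exact fun h => absurd h.2 (not_le.mpr hsb))
  have h2 : ContinuousWithinAt q (Icc b c) s := by
    have heq : ∀ t ∈ Icc b c, q t = g t := by
      intro t ht
      rcases le_or_gt t b with htb | htb
      · have : t = b := le_antisymm htb ht.1
        simp [hq, this, hmatch]
      · simp [hq, not_le.mpr htb]
    rcases lt_or_ge s b with hsb | hsb
    · exact continuousWithinAt_of_notMem_closure (by
        rw [isClosed_Icc.closure_eq]; exact fun h => absurd h.1 (not_le.mpr hsb))
    · exact (hg s ⟨hsb, hs.2⟩).congr heq (heq s ⟨hsb, hs.2⟩)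
  exact (h1.union h2).mono hsub

/-- Uniqueness of lifts along a local homeomorphism. -/
lemma lift_unique [T2Space X] {f : X → Y} (hf : IsLocalHomeomorph f) {T : ℝ} (hT : 0 ≤ T)
    {p q : ℝ → X} (hp : ContinuousOn p (Icc 0 T)) (hq : ContinuousOn q (Icc 0 T))
    (h0 : p 0 = q 0) (hfpq : ∀ t ∈ Icc (0:ℝ) T, f (p t) = f (q t)) :
    ∀ t ∈ Icc (0:ℝ) T, p t = q t := by
  have : PreconnectedSpace (Icc (0:ℝ) T) := Subtype.preconnectedSpace isPreconnected_Icc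
  set A : Set (Icc (0:ℝ) T) := {t | p ↑t = q ↑t} with hA
  have hP : Continuous fun t : Icc (0:ℝ) T => p ↑t := continuousOn_iff_continuous_restrict.1 hp
  have hQ : Continuous fun t : Icc (0:ℝ) T => q ↑t := continuousOn_iff_continuous_restrict.1 hq
  have hclosed : IsClosed A := isClosed_eq hP hQ
  have hopen : IsOpen A := by
    rw [isOpen_iff_mem_nhds]
    intro t ht
    obtain ⟨e, hmem, hfe⟩ := hf (p ↑t)
    have hqmem : q ↑t ∈ e.source := by rw [← ht]; exact hmem
    have hN : IsOpen ((fun s : Icc (0:ℝ) T => p ↑s) ⁻¹' e.source ∩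
        (fun s : Icc (0:ℝ) T => q ↑s) ⁻¹' e.source) :=
      (e.open_source.preimage hP).inter (e.open_source.preimage hQ)
    refine Filter.mem_of_superset (hN.mem_nhds ⟨hmem, hqmem⟩) ?_
    rintro s ⟨hs1, hs2⟩
    have := hfpq ↑s s.2
    rw [hfe] at this
    exact e.injOn hs1 hs2 this
  have hclopen : IsClopen A := ⟨hclosed, hopen⟩
  have : A = univ := hclopen.eq_univ ⟨⟨0, le_refl 0, hT⟩, h0⟩
  intro t ht
  exact (Set.eq_univ_iff_forall.mp this) ⟨t, ht⟩



/-- Existence of lifts along a proper local homeomorphism. -/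
lemma lift_exists {X : Type*} [MetricSpace X] [T2Space Y] {f : X → Y}
    (hf : IsLocalHomeomorph f) {γ : ℝ → Y} (hγ : Continuous γ) {x : X} (hx : f x = γ 0)
    (hK : IsCompact (f ⁻¹' (γ '' Icc 0 1))) :
    ∃ p : ℝ → X, ContinuousOn p (Icc 0 1) ∧ p 0 = x ∧ ∀ t ∈ Icc (0:ℝ) 1, f (p t) = γ t := by
  set S : Set ℝ := {t | t ∈ Icc (0:ℝ) 1 ∧ ∃ p : ℝ → X, ContinuousOn p (Icc 0 t) ∧ p 0 = x ∧
    ∀ s ∈ Icc (0:ℝ) t, f (p s) = γ s} with hS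
  have h0S : (0:ℝ) ∈ S := ⟨⟨le_refl _, zero_le_one⟩, fun _ => x, continuousOn_const, rfl,
    fun s hs => by
      have hs0 : s = 0 := le_antisymm hs.2 hs.1
      rw [hs0, hx]⟩
  have hbdd : BddAbove S := ⟨1, fun t ht => ht.1.2⟩
  have hne : S.Nonempty := ⟨0, h0S⟩
  set T := sSup S with hT
  have hT0 : 0 ≤ T := le_csSup hbdd h0S
  have hT1 : T ≤ 1 := csSup_le hne fun t ht => ht.1.2
  have hseq : ∀ k : ℕ, ∃ t, t ∈ S ∧ T - 1/(k+1) < t := by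
    intro k
    have hlt : T - 1/(k+1 : ℝ) < sSup S := by
      rw [← hT]
      have : (0:ℝ) < 1/(k+1 : ℝ) := by positivity
      linarith
    obtain ⟨t, htS, hlt⟩ := exists_lt_of_lt_csSup hne hlt
    exact ⟨t, htS, hlt⟩
  choose t htS htlt using hseq
  have htle : ∀ k, t k ≤ T := fun k => le_csSup hbdd (htS k)
  have httend : Tendsto t atTop (𝓝 T) := by
    have h1 : Tendsto (fun k : ℕ => T - 1/(k+1)) atTop (𝓝 T) := by
      have := tendsto_one_div_add_atTop_nhds_zero_nat (𝕜 := ℝ)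
      have h2 : Tendsto (fun _ : ℕ => T) atTop (𝓝 T) := tendsto_const_nhds
      simpa using h2.sub this
    exact tendsto_of_tendsto_of_tendsto_of_le_of_le h1 tendsto_const_nhds
      (fun k => (htlt k).le) htle
  choose p hpcont hp0 hpf using fun k => (htS k).2
  set xx : ℕ → X := fun k => p k (t k) with hxx
  have hxxK : ∀ k, xx k ∈ f ⁻¹' (γ '' Icc 0 1) := fun k =>
    ⟨t k, (htS k).1, (hpf k (t k) ⟨(htS k).1.1, le_refl _⟩).symm⟩
  obtain ⟨z, hzK, φ, hφmono, hφtend⟩ := hK.tendsto_subseq hxxK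
  have hfz : f z = γ T := by
    have h1 : Tendsto (fun k => f (xx (φ k))) atTop (𝓝 (f z)) :=
      (hf.continuous.tendsto z).comp hφtend
    have h2 : Tendsto (fun k => f (xx (φ k))) atTop (𝓝 (γ T)) := by
      have heq : (fun k => f (xx (φ k))) = fun k => γ (t (φ k)) :=
        funext fun k => hpf (φ k) _ ⟨(htS _).1.1, le_refl _⟩
      rw [heq]
      exact (hγ.tendsto T).comp (httend.comp hφmono.tendsto_atTop)
    exact tendsto_nhds_unique h1 h2
  obtain ⟨e, hze, hfe⟩ := hf z
  have hγT : γ T ∈ e.target := by rw [← hfz, hfe]; exact e.map_source hze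
  obtain ⟨δ, hδpos, hδ⟩ := Metric.isOpen_iff.mp (e.open_target.preimage hγ) T hγT
  have hball : ∀ s : ℝ, T - δ < s → s < T + δ → γ s ∈ e.target := by
    intro s h1 h2
    apply hδ
    rw [Metric.mem_ball, Real.dist_eq, abs_lt]
    constructor <;> linarith
  have hev1 : ∀ᶠ k in atTop, xx (φ k) ∈ e.source :=
    hφtend.eventually (e.open_source.eventually_mem hze)
  have hev2 : ∀ᶠ k in atTop, T - δ < t (φ k) :=
    (httend.comp hφmono.tendsto_atTop).eventually (eventually_gt_nhds (by linarith))
  obtain ⟨k, hk1, hk2⟩ := (hev1.and hev2).exists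
  set t' := t (φ k) with ht'
  set b := min (T + δ/2) 1 with hb
  have ht'T : t' ≤ T := htle _
  have ht'0 : 0 ≤ t' := (htS _).1.1
  have ht'b : t' ≤ b := le_min (by linarith) (htS _).1.2
  have hTb : T ≤ b := le_min (by linarith) hT1
  have hbIcc : b ∈ Icc (0:ℝ) 1 := ⟨le_trans ht'0 ht'b, min_le_right _ _⟩
  have htarget : ∀ s, t' ≤ s → s ≤ b → γ s ∈ e.target := fun s h1 h2 =>
    hball s (lt_of_lt_of_le hk2 h1)
      (lt_of_le_of_lt (h2.trans (min_le_left _ _)) (by linarith))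
  have hmatch : p (φ k) t' = e.symm (γ t') := by
    have h1 : f (p (φ k) t') = γ t' := hpf _ _ ⟨ht'0, le_refl _⟩
    have h2 : γ t' = e (p (φ k) t') := by rw [← h1, hfe]
    rw [h2, e.left_inv hk1]
  set q : ℝ → X := fun s => if s ≤ t' then p (φ k) s else e.symm (γ s) with hq
  have hg : ContinuousOn (fun s => e.symm (γ s)) (Icc t' b) :=
    e.continuousOn_symm.comp hγ.continuousOn (fun s hs => htarget s hs.1 hs.2)
  have hqcont : ContinuousOn q (Icc 0 b) := glue_contOn (hpcont _) hg hmatch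
  have hbS : b ∈ S := by
    refine ⟨hbIcc, q, hqcont, ?_, ?_⟩
    · simp only [hq, if_pos ht'0]; exact hp0 _
    · intro s hs
      rcases le_or_gt s t' with hle | hlt
      · simp only [hq, if_pos hle]
        exact hpf _ _ ⟨hs.1, hle⟩
      · simp only [hq, if_neg (not_le.mpr hlt)]
        rw [hfe]
        exact e.right_inv (htarget s hlt.le hs.2)
  have hbT : b ≤ T := le_csSup hbdd hbS
  have hb1 : b = 1 := by
    rcases lt_or_eq_of_le hT1 with h | h
    · have : T < b := lt_min (by linarith) h
      linarith
    · exact le_antisymm (min_le_right _ _) (h ▸ hTb)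
  rw [hb1] at hbS
  exact hbS.2


end Lifts

/-- A proper local homeomorphism of a real normed space to itself is injective. -/
lemma injective_of_proper {E : Type*} [NormedAddCommGroup E] [NormedSpace ℝ E]
    [PreconnectedSpace E] {f : E → E} (hf : IsLocalHomeomorph f)
    (hproper : ∀ K : Set E, IsCompact K → IsCompact (f ⁻¹' K)) :
    Function.Injective f := by
  intro a b hab
  set c := f a with hc
  set σ : E → ℝ → E := fun x t => f x + t • (c - f x) with hσ
  have hσcont : Continuous fun q : E × ℝ => σ q.1 q.2 := by
    apply (hf.continuous.comp continuous_fst).add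
    exact continuous_snd.smul (continuous_const.sub (hf.continuous.comp continuous_fst))
  have hσx : ∀ x, Continuous (σ x) := fun x =>
    hσcont.comp (Continuous.prodMk_right x)
  have hσ0 : ∀ x, σ x 0 = f x := fun x => by simp [hσ]
  have hσ1 : ∀ x, σ x 1 = c := fun x => by simp [hσ]
  have hex : ∀ x : E, ∃ p : ℝ → E, ContinuousOn p (Icc 0 1) ∧ p 0 = x ∧
      ∀ t ∈ Icc (0:ℝ) 1, f (p t) = σ x t := fun x =>
    lift_exists hf (hσx x) (hσ0 x).symm (hproper _ (isCompact_Icc.image (hσx x)))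
  choose P hPc hP0 hPf using hex
  set L : E → E := fun x => P x 1 with hL
  have hfL : ∀ x, f (L x) = c := fun x => (hPf x 1 ⟨zero_le_one, le_refl 1⟩).trans (hσ1 x)
  have hfix : ∀ x, f x = c → L x = x := by
    intro x hx
    have : ∀ t ∈ Icc (0:ℝ) 1, P x t = x := by
      apply lift_unique hf zero_le_one (hPc x) continuousOn_const (hP0 x)
      intro t ht
      rw [hPf x t ht]
      simp [hσ, hx]
    exact this 1 ⟨zero_le_one, le_refl 1⟩
  -- Continuity of L
  have hLcont : Continuous L := by
    rw [continuous_iff_continuousAt]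
    intro w
    set ℓ : ℝ → E := P w with hℓ
    -- charts along the lifted path
    have hch : ∀ τ : Icc (0:ℝ) 1, ∃ e : OpenPartialHomeomorph E E, ℓ ↑τ ∈ e.source ∧ f = ⇑e :=
      fun τ => hf (ℓ ↑τ)
    choose ch hch1 hch2 using hch
    have hO : ∀ τ : Icc (0:ℝ) 1, ∃ O : Set ℝ, IsOpen O ∧ ↑τ ∈ O ∧
        ∀ s ∈ O ∩ Icc (0:ℝ) 1, ℓ s ∈ (ch τ).source := by
      intro τ
      have := (hPc w ↑τ τ.2) ((ch τ).open_source.mem_nhds (hch1 τ))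
      obtain ⟨O, hOopen, hOmem, hOsub⟩ := mem_nhdsWithin.mp this
      exact ⟨O, hOopen, hOmem, fun s hs => hOsub ⟨hs.1, hs.2⟩⟩
    choose O hOopen hOmem hOsub using hO
    obtain ⟨δ, hδpos, hδ⟩ := lebesgue_number_lemma_of_metric isCompact_Icc hOopen
      (fun s hs => mem_iUnion.mpr ⟨⟨s, hs⟩, hOmem _⟩)
    obtain ⟨m, hm⟩ := exists_nat_one_div_lt hδpos
    set M : ℕ := m + 1 with hM
    have hMpos : (0:ℝ) < M := by positivity
    have hMstep : ∀ i : ℕ, ((i+1 : ℕ) : ℝ)/M - (i : ℝ)/M = 1/M := by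
      intro i; push_cast; field_simp; ring
    -- main induction
    have main : ∀ i : ℕ, i ≤ M → ∃ φ : E → E, ContinuousAt φ w ∧ φ w = ℓ ((i:ℝ)/M) ∧
        ∀ᶠ x in 𝓝 w, ∃ p : ℝ → E, ContinuousOn p (Icc 0 ((i:ℝ)/M)) ∧ p 0 = x ∧
          (∀ s ∈ Icc (0:ℝ) ((i:ℝ)/M), f (p s) = σ x s) ∧ p ((i:ℝ)/M) = φ x := by
      intro i
      induction i with
      | zero =>
        intro _
        refine ⟨id, continuousAt_id, ?_, ?_⟩
        · simp only [Nat.cast_zero, zero_div, id_eq]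
          exact (hP0 w).symm
        · apply Eventually.of_forall
          intro x
          refine ⟨fun _ => x, continuousOn_const, rfl, ?_, rfl⟩
          intro s hs
          have hs0 : s = 0 := by
            simp only [Nat.cast_zero, zero_div] at hs
            exact le_antisymm hs.2 hs.1
          rw [hs0, hσ0]
      | succ i ih =>
        intro hiM
        obtain ⟨φ, hφc, hφw, hφev⟩ := ih (le_of_lt (Nat.lt_of_succ_le hiM))
        set t₀ : ℝ := (i:ℝ)/M with ht₀
        set t₁ : ℝ := ((i+1 : ℕ):ℝ)/M with ht₁
        have ht01 : t₀ < t₁ := by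
          rw [ht₀, ht₁, div_lt_div_iff_of_pos_right hMpos]
          exact_mod_cast Nat.lt_succ_self i
        have ht₀0 : 0 ≤ t₀ := by positivity
        have ht₁1 : t₁ ≤ 1 := by
          rw [ht₁, div_le_one hMpos]
          exact_mod_cast hiM
        have hIcc : Icc t₀ t₁ ⊆ Icc (0:ℝ) 1 := fun s hs => ⟨le_trans ht₀0 hs.1, le_trans hs.2 ht₁1⟩
        have ht₀Icc : t₀ ∈ Icc (0:ℝ) 1 := ⟨ht₀0, le_trans ht01.le ht₁1⟩
        obtain ⟨τ, hτ⟩ := hδ t₀ ht₀Icc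
        set e := ch τ with he
        have hsub : ∀ s ∈ Icc t₀ t₁, ℓ s ∈ e.source := by
          intro s hs
          apply hOsub τ
          refine ⟨hτ ?_, hIcc hs⟩
          rw [Metric.mem_ball, Real.dist_eq, abs_lt]
          have h1 : s - t₀ ≤ 1/M := by
            have := hMstep i
            have : t₁ - t₀ = 1/M := by rw [ht₁, ht₀]; exact this
            linarith [hs.2]
          have h2 : 0 ≤ s - t₀ := by linarith [hs.1]
          have h3 : (1:ℝ)/M < δ := by rw [hM]; push_cast; exact hm
          constructor <;> linarith
        have hℓmem : ∀ s ∈ Icc t₀ t₁, σ w s ∈ e.target := by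
          intro s hs
          have h1 : σ w s = f (ℓ s) := (hPf w s (hIcc hs)).symm
          rw [h1, hch2 τ]
          exact e.map_source (hsub s hs)
        set φ' : E → E := fun x => e.symm (σ x t₁) with hφ'
        have hℓt₁ : ℓ t₁ ∈ e.source := hsub t₁ ⟨ht01.le, le_refl _⟩
        have hφ'w : φ' w = ℓ t₁ := by
          show e.symm (σ w t₁) = ℓ t₁
          have h1 : σ w t₁ = f (ℓ t₁) := (hPf w t₁ (hIcc ⟨ht01.le, le_refl _⟩)).symm
          rw [h1, hch2 τ]
          exact e.left_inv hℓt₁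
        have hφ'c : ContinuousAt φ' w := by
          have hmem : σ w t₁ ∈ e.target := hℓmem t₁ ⟨ht01.le, le_refl _⟩
          have h1 : ContinuousAt (fun x => σ x t₁) w :=
            (hσcont.comp (continuous_id.prodMk continuous_const)).continuousAt
          exact (e.symm.continuousAt (by rwa [OpenPartialHomeomorph.symm_source])).comp h1
        refine ⟨φ', hφ'c, hφ'w, ?_⟩
        -- eventual conditions
        have hev2 : ∀ᶠ x in 𝓝 w, φ x ∈ e.source := by
          apply hφc
          apply e.open_source.mem_nhds
          rw [hφw]
          exact hsub t₀ ⟨le_refl _, ht01.le⟩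
        have hev3 : ∀ᶠ x in 𝓝 w, ∀ s ∈ Icc t₀ t₁, σ x s ∈ e.target := by
          have hΩ : IsOpen ((fun q : E × ℝ => σ q.1 q.2) ⁻¹' e.target) :=
            e.open_target.preimage hσcont
          have hsub' : {w} ×ˢ Icc t₀ t₁ ⊆ (fun q : E × ℝ => σ q.1 q.2) ⁻¹' e.target := by
            rintro ⟨x, s⟩ ⟨hx, hs⟩
            simp only [mem_singleton_iff] at hx
            subst hx
            exact hℓmem s hs
          obtain ⟨u, v, huo, hvo, hwu, hIv, huv⟩ := generalized_tube_lemma isCompact_singleton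
            isCompact_Icc hΩ hsub'
          filter_upwards [huo.mem_nhds (hwu rfl)] with x hx s hs
          exact huv (Set.mk_mem_prod hx (hIv hs))
        filter_upwards [hφev, hev2, hev3] with x hx1 hx2 hx3
        obtain ⟨p, hpc, hp0, hpf', hpe⟩ := hx1
        have hmatch : p t₀ = e.symm (σ x t₀) := by
          have h1 : σ x t₀ = f (p t₀) := (hpf' t₀ ⟨ht₀0, le_refl _⟩).symm
          rw [h1, hch2 τ, e.left_inv (by rw [hpe]; exact hx2)]
        refine ⟨fun s => if s ≤ t₀ then p s else e.symm (σ x s), ?_, ?_, ?_, ?_⟩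
        · apply glue_contOn hpc ?_ hmatch
          exact e.continuousOn_symm.comp (hσx x).continuousOn (fun s hs => hx3 s hs)
        · simp only [if_pos ht₀0]; exact hp0
        · intro s hs
          rcases le_or_gt s t₀ with hle | hlt
          · simp only [if_pos hle]
            exact hpf' s ⟨hs.1, hle⟩
          · simp only [if_neg (not_le.mpr hlt)]
            rw [hch2 τ]
            exact e.right_inv (hx3 s ⟨hlt.le, hs.2⟩)
        · simp only [if_neg (not_le.mpr ht01)]; rfl
    -- conclude continuity at w
    obtain ⟨φ, hφc, hφw, hφev⟩ := main M (le_refl M)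
    have hM1 : ((M:ℕ):ℝ)/(M:ℝ) = 1 := div_self (ne_of_gt hMpos)
    rw [hM1] at hφev
    have heq : L =ᶠ[𝓝 w] φ := by
      filter_upwards [hφev] with x hx
      obtain ⟨p, hpc, hp0, hpf', hpe⟩ := hx
      have : ∀ t ∈ Icc (0:ℝ) 1, P x t = p t := by
        apply lift_unique hf zero_le_one (hPc x) hpc (by rw [hP0, hp0])
        intro t ht
        rw [hPf x t ht, hpf' t ht]
      rw [hL]
      simp only
      rw [this 1 ⟨zero_le_one, le_refl _⟩, hpe]
    exact hφc.congr heq.symm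
  -- clopen argument
  obtain ⟨e, hae, hfe⟩ := hf a
  have hA : L ⁻¹' {a} = L ⁻¹' e.source := by
    ext z
    simp only [mem_preimage, mem_singleton_iff]
    constructor
    · intro h; rw [h]; exact hae
    · intro h
      apply e.injOn h hae
      rw [← hfe, hfL z, hc]
  have hopenA : IsOpen (L ⁻¹' {a}) := by rw [hA]; exact e.open_source.preimage hLcont
  have hclosedA : IsClosed (L ⁻¹' {a}) := isClosed_singleton.preimage hLcont
  have hclopen : IsClopen (L ⁻¹' {a}) := ⟨hclosedA, hopenA⟩
  have huniv : L ⁻¹' {a} = univ := hclopen.eq_univ ⟨a, hfix a rfl⟩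
  have hb : L b = a := by
    have := Set.eq_univ_iff_forall.mp huniv b
    simpa using this
  rw [hfix b hab.symm] at hb
  exact hb.symm


/-- **Hadamard-type criterion.** Let `F : ℝⁿ → ℝⁿ` be a `C¹` map with
`det DF(x) ≠ 0` everywhere. Then `F` is a homeomorphism of `ℝⁿ` onto `ℝⁿ` iff
`‖F x‖ → ∞` as `‖x‖ → ∞`. -/
theorem homeomorphism_iff_norm_proper (n : ℕ)
    (F : EuclideanSpace ℝ (Fin n) → EuclideanSpace ℝ (Fin n))
    (hC1 : ContDiff ℝ 1 F)
    (hJ : ∀ x : EuclideanSpace ℝ (Fin n), LinearMap.det (fderiv ℝ F x).toLinearMap ≠ 0) :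
    (∃ e : EuclideanSpace ℝ (Fin n) ≃ₜ EuclideanSpace ℝ (Fin n), ⇑e = F) ↔
      Tendsto (fun x => ‖F x‖) (cocompact (EuclideanSpace ℝ (Fin n))) atTop := by
  constructor
  · rintro ⟨e, he⟩
    have h1 : Tendsto e (cocompact (EuclideanSpace ℝ (Fin n))) (cocompact (EuclideanSpace ℝ (Fin n))) :=
      (isProperMap_iff_tendsto_cocompact.mp e.isProperMap).2
    rw [he] at h1
    exact tendsto_norm_cocompact_atTop.comp h1
  · intro h
    have hcont : Continuous F := hC1.continuous
    have hproper : ∀ K : Set (EuclideanSpace ℝ (Fin n)), IsCompact K → IsCompact (F ⁻¹' K) := by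
      intro K hK
      obtain ⟨r, hr⟩ := hK.isBounded.subset_closedBall 0
      have hev : ∀ᶠ x in cocompact (EuclideanSpace ℝ (Fin n)), r + 1 ≤ ‖F x‖ := h.eventually_ge_atTop (r + 1)
      obtain ⟨C, hC, hCsub⟩ := mem_cocompact.mp hev
      refine IsCompact.of_isClosed_subset hC (hK.isClosed.preimage hcont) ?_
      intro x hx
      by_contra hxC
      have h1 : r + 1 ≤ ‖F x‖ := hCsub hxC
      have h2 : ‖F x‖ ≤ r := by
        have := hr hx
        simpa [Metric.mem_closedBall, dist_zero_right] using this
      linarith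
    have hlocal : IsLocalHomeomorph F := by
      intro x
      have hd : HasStrictFDerivAt F (fderiv ℝ F x) x :=
        hC1.contDiffAt.hasStrictFDerivAt one_ne_zero
      set Φ := (LinearMap.equivOfDetNeZero (fderiv ℝ F x).toLinearMap
        (hJ x)).toContinuousLinearEquiv with hΦ
      have hkey : (Φ : EuclideanSpace ℝ (Fin n) →L[ℝ] EuclideanSpace ℝ (Fin n)) = fderiv ℝ F x := by
        apply ContinuousLinearMap.coe_injective
        rw [hΦ]
        simp
      have hd' : HasStrictFDerivAt F (Φ : EuclideanSpace ℝ (Fin n) →L[ℝ] EuclideanSpace ℝ (Fin n)) x := by rwa [hkey]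
      exact ⟨hd'.toOpenPartialHomeomorph F, hd'.mem_toOpenPartialHomeomorph_source,
        (hd'.toOpenPartialHomeomorph_coe).symm⟩
    haveI : PreconnectedSpace (EuclideanSpace ℝ (Fin n)) :=
      ⟨(convex_univ : Convex ℝ (univ : Set (EuclideanSpace ℝ (Fin n)))).isPreconnected⟩
    have hinj : Function.Injective F := injective_of_proper hlocal hproper
    have hsurj : Function.Surjective F := by
      have hFproper : IsProperMap F := isProperMap_iff_isCompact_preimage.mpr ⟨hcont, hproper⟩
      have hclosed : IsClosed (range F) := hFproper.isClosed_range
      have hopen : IsOpen (range F) := hlocal.isOpenMap.isOpen_range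
      have hclopen : IsClopen (range F) := ⟨hclosed, hopen⟩
      have : range F = univ := hclopen.eq_univ ⟨F 0, mem_range_self 0⟩
      exact Set.range_eq_univ.mp this
    exact ⟨hlocal.toHomeomorphOfBijective ⟨hinj, hsurj⟩, rfl⟩
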